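/- Let n, w, v be real numbers with v > 0 and n − w − v > 0. Then for every real φ with 0 ≤ φ ≤ 1, max(φ/v, 2(1−φ)/(n−w−v)) ≥ 2/(n−w+v); moreover φ* = 2v/(n−w+v) satisfies 0 ≤ φ* ≤ 1 and max(φ*/v, 2(1−φ*)/(n−w−v)) = 2/(n−w+v). (Theorem 10: the skewness φ of an optimal complete traffic schedule for a demand matrix of type M(v) on rr-sys is at most 2v/(n−w+v).) -/

import Mathlib

/-- Theorem 10: the skewness `φ` of an optimal complete traffic schedule for a
demand of type `M(v)` on rr-sys (with `w` inactive cells per row) is at most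
`2v/(n-w+v)`: every `φ ∈ [0,1]` gives a worst per-edge load of at least
`2/(n-w+v)`, and `φ* = 2v/(n-w+v)` lies in `[0,1]` and attains this value. -/
theorem skewness_upper_bound_Mv (n w v : ℝ) (hv : 0 < v) (h : 0 < n - w - v) :
    (∀ φ : ℝ, 0 ≤ φ → φ ≤ 1 →
      2 / (n - w + v) ≤ max (φ / v) (2 * (1 - φ) / (n - w - v))) ∧
    (0 ≤ 2 * v / (n - w + v) ∧ 2 * v / (n - w + v) ≤ 1 ∧
      max ((2 * v / (n - w + v)) / v)
          (2 * (1 - 2 * v / (n - w + v)) / (n - w - v))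
        = 2 / (n - w + v)) := by
  have hD : 0 < n - w + v := by linarith
  constructor
  · intro φ h0 h1
    rcases le_or_gt (2 * v / (n - w + v)) φ with hc | hc
    · refine le_trans ?_ (le_max_left _ _)
      rw [div_le_div_iff₀ hD hv]
      rw [div_le_iff₀ hD] at hc
      nlinarith
    · refine le_trans ?_ (le_max_right _ _)
      rw [div_le_div_iff₀ hD h]
      rw [lt_div_iff₀ hD] at hc
      nlinarith
  · refine ⟨by positivity, ?_, ?_⟩
    · rw [div_le_one hD]; linarith
    · have e1 : (2 * v / (n - w + v)) / v = 2 / (n - w + v) := by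
        field_simp
      have e2 : 2 * (1 - 2 * v / (n - w + v)) / (n - w - v) = 2 / (n - w + v) := by
        field_simp; ring
      rw [e1, e2, max_self]
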